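/- Let N be an admissible algebra with admissible projection π, and S_π = {x ∈ N : π(exp₁ x) = 0}. For every s ∈ S_π, the map ρ := π ∘ M_{exp s} is again an admissible projection and S_ρ = S_π − s. -/

import Mathlib

/-- `pw F N k` is the characteristic ideal `N^k`. -/
def pw (F N : Type*) [Field F] [NonUnitalNonAssocRing N] [Module F N] : ℕ → Submodule F N
  | 0 => ⊤
  | 1 => ⊤
  | (k+2) => Submodule.span F {z : N | ∃ x : N, ∃ y ∈ pw F N (k+1), z = x * y}

/-- The annihilator `Ann(N) = {x | x·N = 0}` of a commutative algebra `N`. -/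
def annSub (F N : Type*) [Field F] [NonUnitalCommRing N] [Module F N]
    [SMulCommClass F N N] [IsScalarTower F N N] : Submodule F N where
  carrier := {x | ∀ y : N, x * y = 0}
  add_mem' := by intro a b ha hb y; simp [add_mul, ha y, hb y]
  zero_mem' := by intro y; simp
  smul_mem' := by intro c x hx y; rw [smul_mul_assoc, hx y, smul_zero]

/-- `npw x k = x^(k+1)` in a non-unital ring. -/
def npw {N : Type*} [Mul N] (x : N) : ℕ → N
  | 0 => x
  | (k+1) => x * npw x k

/-- The truncated exponential `exp₁ x = Σ_{k=1}^{m} x^k/k!`. -/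
noncomputable def exp1 (F : Type*) {N : Type*} [Field F] [NonUnitalNonAssocRing N]
    [Module F N] (m : ℕ) (x : N) : N :=
  ∑ k ∈ Finset.range m, ((Nat.factorial (k + 1) : F))⁻¹ • npw x k

/- ------------------- auxiliary lemmas ------------------- -/

set_option linter.unusedSectionVars false

lemma tri {M : Type*} [AddCommMonoid M] (ν : ℕ) (g : ℕ → ℕ → M)
    (hg : ∀ i j, ν < i + j → g i j = 0) :
    ∑ i ∈ Finset.range (ν+1), ∑ j ∈ Finset.range (ν+1), g i j
      = ∑ n ∈ Finset.range (ν+1), ∑ k ∈ Finset.range (n+1), g k (n-k) := by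
  rw [← Finset.sum_product', Finset.sum_sigma']
  have h1 : ∑ p ∈ Finset.range (ν+1) ×ˢ Finset.range (ν+1), g p.1 p.2
      = ∑ p ∈ (Finset.range (ν+1) ×ˢ Finset.range (ν+1)).filter (fun p => p.1 + p.2 ≤ ν),
          g p.1 p.2 := by
    refine (Finset.sum_subset (Finset.filter_subset _ _) ?_).symm
    intro p hp hp'
    simp only [Finset.mem_filter, not_and, not_le] at hp'
    exact hg _ _ (hp' hp)
  rw [h1]
  refine Finset.sum_nbij' (fun p => ⟨p.1 + p.2, p.1⟩) (fun q => (q.2, q.1 - q.2)) ?_ ?_ ?_ ?_ ?_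
  · intro p hp
    simp only [Finset.mem_filter, Finset.mem_product, Finset.mem_range] at hp
    simp only [Finset.mem_sigma, Finset.mem_range]
    omega
  · intro q hq
    simp only [Finset.mem_sigma, Finset.mem_range] at hq
    simp only [Finset.mem_filter, Finset.mem_product, Finset.mem_range]
    omega
  · intro p hp; simp
  · intro q hq
    simp only [Finset.mem_sigma, Finset.mem_range] at hq
    obtain ⟨n, k⟩ := q
    simp only at hq ⊢
    congr 1
    omega
  · intro p hp
    simp only
    congr 1
    omega

section aux
variable {F N : Type*} [Field F] [CharZero F] [NonUnitalCommRing N] [Module F N]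
  [SMulCommClass F N N] [IsScalarTower F N N]

lemma pw_succ_le : ∀ k : ℕ, pw F N (k+1) ≤ pw F N k
  | 0 => le_top
  | 1 => le_top
  | (k+2) => by
    show pw F N (k+3) ≤ pw F N (k+2)
    refine Submodule.span_le.2 ?_
    rintro z ⟨x, y, hy, rfl⟩
    exact Submodule.subset_span ⟨x, y, pw_succ_le (k+1) hy, rfl⟩

lemma pw_le_pw {j k : ℕ} (h : j ≤ k) : pw F N k ≤ pw F N j := by
  induction k with
  | zero => simp_all
  | succ k ih =>
    rcases Nat.lt_or_ge j (k+1) with h' | h'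
    · exact le_trans (pw_succ_le k) (ih (by omega))
    · have : j = k+1 := by omega
      subst this; exact le_rfl

lemma mul_mem_pw {k : ℕ} (x : N) {y : N} (hy : y ∈ pw F N (k+1)) : x * y ∈ pw F N (k+2) :=
  Submodule.subset_span ⟨x, y, hy, rfl⟩

lemma npw_mem (x : N) : ∀ k : ℕ, npw x k ∈ pw F N (k+1)
  | 0 => Submodule.mem_top
  | (k+1) => mul_mem_pw x (npw_mem x k)

lemma npw_mul_npw_mem (x y : N) : ∀ i j : ℕ, npw x i * npw y j ∈ pw F N (i+j+2)
  | 0, j => by simpa [npw] using mul_mem_pw (F := F) x (npw_mem y j)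
  | (i+1), j => by
    have h0 : npw x (i+1) * npw y j = x * (npw x i * npw y j) := by
      simp [npw, mul_assoc]
    rw [h0]
    have h := mul_mem_pw (F := F) x (npw_mul_npw_mem x y i j)
    have he : i + 1 + j + 2 = i + j + 2 + 1 := by omega
    rw [he]
    exact h

variable (ν : ℕ) (hnil : pw F N (ν + 1) = ⊥)

include hnil in
lemma npw_zero {x : N} {k : ℕ} (hk : ν ≤ k) : npw x k = 0 := by
  have h := pw_le_pw (F := F) (N := N) (show ν + 1 ≤ k + 1 by omega) (npw_mem x k)
  rw [hnil] at h
  simpa using h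

include hnil in
lemma npw_mul_npw_zero {x y : N} {i j : ℕ} (hk : ν ≤ i + j + 1) :
    npw x i * npw y j = 0 := by
  have h := pw_le_pw (F := F) (N := N) (show ν + 1 ≤ i + j + 2 by omega)
    (npw_mul_npw_mem x y i j)
  rw [hnil] at h
  simpa using h

/-- `inr (npw x k) = (inr x)^(k+1)` in the unitization. -/
lemma inr_npw (x : N) : ∀ k : ℕ,
    (↑(npw x k) : Unitization F N) = (↑x : Unitization F N)^(k+1)
  | 0 => by simp [npw]
  | (k+1) => by
    rw [show npw x (k+1) = x * npw x k from rfl, Unitization.inr_mul, inr_npw x k]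
    ring

lemma inr_exp1 (x : N) :
    (↑(exp1 F ν x) : Unitization F N)
      = ∑ k ∈ Finset.range ν, ((Nat.factorial (k+1) : F))⁻¹ • (↑x : Unitization F N)^(k+1) := by
  rw [exp1]
  show (Unitization.inrNonUnitalAlgHom F N) (∑ k ∈ Finset.range ν, ((Nat.factorial (k+1) : F))⁻¹ • npw x k) = _
  rw [map_sum]
  refine Finset.sum_congr rfl fun k _ => ?_
  show (↑(((Nat.factorial (k+1) : F))⁻¹ • npw x k) : Unitization F N) = _
  rw [Unitization.inr_smul, inr_npw]

/-- Truncated full exponential in the unitization. -/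
noncomputable def Efun (F : Type*) {N : Type*} [Field F] [NonUnitalCommRing N] [Module F N]
    [SMulCommClass F N N] [IsScalarTower F N N] (ν : ℕ) (u : Unitization F N) :
    Unitization F N :=
  ∑ k ∈ Finset.range (ν+1), ((Nat.factorial k : F))⁻¹ • u^k

lemma inr_exp1_eq (x : N) :
    (↑(exp1 F ν x) : Unitization F N) = Efun F ν (↑x) - 1 := by
  rw [inr_exp1, Efun, Finset.sum_range_succ']
  simp [Nat.factorial]

include hnil in
lemma Efun_mul (x y : N) :
    Efun F ν (↑x : Unitization F N) * Efun F ν (↑y)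
      = Efun F ν ((↑x : Unitization F N) + (↑y : Unitization F N)) := by
  set a : Unitization F N := ↑x
  set b : Unitization F N := ↑y
  have hpowa : ∀ k : ℕ, ν < k → a^k = 0 := by
    intro k hk
    obtain ⟨m, rfl⟩ : ∃ m, k = m + 1 := ⟨k - 1, by omega⟩
    rw [← inr_npw, npw_zero ν hnil (by omega), Unitization.inr_zero]
  have hpowb : ∀ k : ℕ, ν < k → b^k = 0 := by
    intro k hk
    obtain ⟨m, rfl⟩ : ∃ m, k = m + 1 := ⟨k - 1, by omega⟩
    rw [← inr_npw, npw_zero ν hnil (by omega), Unitization.inr_zero]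
  have hab : ∀ i j : ℕ, ν < i + j → a^i * b^j = 0 := by
    intro i j hij
    rcases Nat.eq_zero_or_pos i with hi | hi
    · subst hi; rw [pow_zero, one_mul]; exact hpowb j (by omega)
    rcases Nat.eq_zero_or_pos j with hj | hj
    · subst hj; rw [pow_zero, mul_one]; exact hpowa i (by omega)
    obtain ⟨i', rfl⟩ : ∃ i', i = i' + 1 := ⟨i - 1, by omega⟩
    obtain ⟨j', rfl⟩ : ∃ j', j = j' + 1 := ⟨j - 1, by omega⟩
    rw [← inr_npw, ← inr_npw, ← Unitization.inr_mul,
      npw_mul_npw_zero ν hnil (by omega), Unitization.inr_zero]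
  rw [Efun, Efun, Efun, Finset.sum_mul_sum]
  have hstep : ∀ i j : ℕ,
      ((Nat.factorial i : F))⁻¹ • a^i * ((Nat.factorial j : F))⁻¹ • b^j
        = (((Nat.factorial i : F))⁻¹ * ((Nat.factorial j : F))⁻¹) • (a^i * b^j) := by
    intro i j
    rw [smul_mul_smul_comm]
  simp only [hstep]
  rw [tri ν (fun i j => (((Nat.factorial i : F))⁻¹ * ((Nat.factorial j : F))⁻¹) • (a^i * b^j))
    (fun i j hij => by simp only [hab i j hij, smul_zero])]
  refine Finset.sum_congr rfl fun n hn => ?_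
  rw [add_pow, Finset.smul_sum]
  refine Finset.sum_congr rfl fun k hk => ?_
  rw [Finset.mem_range] at hk
  have hkn : k ≤ n := by omega
  have hfact : (n.choose k : F) * (Nat.factorial k) * (Nat.factorial (n - k))
      = (Nat.factorial n) := by
    exact_mod_cast Nat.choose_mul_factorial_mul_factorial hkn
  have hcoeff : ((Nat.factorial k : F))⁻¹ * ((Nat.factorial (n-k) : F))⁻¹
      = ((Nat.factorial n : F))⁻¹ * (n.choose k : F) := by
    have h1 : (Nat.factorial k : F) ≠ 0 := Nat.cast_ne_zero.2 (Nat.factorial_ne_zero k)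
    have h2 : (Nat.factorial (n-k) : F) ≠ 0 := Nat.cast_ne_zero.2 (Nat.factorial_ne_zero _)
    have h3 : (Nat.factorial n : F) ≠ 0 := Nat.cast_ne_zero.2 (Nat.factorial_ne_zero n)
    field_simp
    linear_combination -hfact
  rw [hcoeff, mul_smul]
  congr 1
  rw [mul_comm (a ^ k * b ^ (n - k)) ((n.choose k : Unitization F N)), ← nsmul_eq_mul,
    ← Nat.cast_smul_eq_nsmul F]

include hnil in
/-- The key exponential addition identity in `N`. -/
lemma exp1_add (x y : N) :
    exp1 F ν (x + y) = exp1 F ν x + exp1 F ν y + exp1 F ν x * exp1 F ν y := by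
  apply Unitization.inr_injective (R := F)
  rw [Unitization.inr_add, Unitization.inr_add, Unitization.inr_mul]
  rw [inr_exp1_eq, inr_exp1_eq, inr_exp1_eq, Unitization.inr_add]
  rw [← Efun_mul ν hnil x y]
  ring

end aux

/-- Let `N` be an admissible algebra, `π` an admissible projection and
`s ∈ S_π`.  Then `ρ := π ∘ M_{exp s} = π + π ∘ L_{exp₁ s}` is again an admissible
projection and `S_ρ = S_π − s`. -/
theorem stmt10 {F N : Type*} [Field F] [CharZero F] [NonUnitalCommRing N] [Module F N]
    [SMulCommClass F N N] [IsScalarTower F N N] [FiniteDimensional F N]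
    (hAnn : Module.finrank F (annSub F N) = 1)
    (ν : ℕ) (hnil : pw F N (ν + 1) = ⊥)
    (π : N →ₗ[F] N) (hproj : π ∘ₗ π = π) (hrange : LinearMap.range π = annSub F N)
    (s : N) (hs : π (exp1 F ν s) = 0) :
    (π + π ∘ₗ LinearMap.mul F N (exp1 F ν s)) ∘ₗ (π + π ∘ₗ LinearMap.mul F N (exp1 F ν s))
        = π + π ∘ₗ LinearMap.mul F N (exp1 F ν s) ∧
    LinearMap.range (π + π ∘ₗ LinearMap.mul F N (exp1 F ν s)) = annSub F N ∧
    ∀ x : N, (π + π ∘ₗ LinearMap.mul F N (exp1 F ν s)) (exp1 F ν x) = 0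
      ↔ π (exp1 F ν (x + s)) = 0 := by
  set e := exp1 F ν s with he
  have hππ : ∀ z : N, π (π z) = π z := fun z => congrArg (fun f => f z) hproj
  have hmemAnn : ∀ z : N, π z ∈ annSub F N := by
    intro z; rw [← hrange]; exact LinearMap.mem_range_self π z
  have hannmul : ∀ a : N, a ∈ annSub F N → ∀ y : N, a * y = 0 := fun a ha => ha
  have hfix : ∀ a : N, a ∈ annSub F N → π a = a := by
    intro a ha
    rw [← hrange] at ha
    obtain ⟨b, rfl⟩ := ha
    exact hππ b
  have hρ : ∀ z : N, (π + π ∘ₗ LinearMap.mul F N e) z = π (z + e * z) := by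
    intro z
    simp [LinearMap.mul_apply']
  refine ⟨?_, ?_, ?_⟩
  · ext z
    rw [LinearMap.comp_apply, hρ, hρ]
    have hann : π (z + e * z) ∈ annSub F N := hmemAnn _
    have hez : e * π (z + e * z) = 0 := by
      rw [mul_comm]; exact hannmul _ hann e
    rw [hez, add_zero, hππ]
  · apply le_antisymm
    · rintro a ⟨z, rfl⟩
      rw [hρ]
      exact hmemAnn _
    · intro a ha
      refine ⟨a, ?_⟩
      rw [hρ]
      have : e * a = 0 := by rw [mul_comm]; exact hannmul _ ha e
      rw [this, add_zero]
      exact hfix a ha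
  · intro x
    have hadd := exp1_add (F := F) (N := N) ν hnil x s
    have : π (exp1 F ν (x + s)) = (π + π ∘ₗ LinearMap.mul F N e) (exp1 F ν x) := by
      rw [hadd, hρ]
      rw [map_add, map_add, ← he, hs, add_zero, map_add]
      rw [mul_comm (exp1 F ν x) e]
    rw [this]
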